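/- Changing the divergence by ⟨e,·⟩ changes the generalized scalar curvature by R(𝒢, div + ⟨e,·⟩) − R(𝒢, div) = −|e|²_𝒢 − 2 div(𝒢e), where |e|²_𝒢 = ⟨𝒢e, e⟩. -/
import Mathlib


/-- Algebraic model of a Courant algebroid: the commutative ring `R` plays the
role of the smooth functions `C^∞(M)`, `E` plays the role of the module of
sections `Γ(E)`, and vector fields on `M` are modelled as `Derivation ℝ R R`.
The four axioms of Definition 2.1 are `jacobi`, `leibniz`, `invariance`,
`symmetrized`; `Dop` is the operator `𝒟 = ρ^T ∘ d`, characterized by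
`⟨𝒟 f, w⟩ = ρ(w) f`. -/
structure CourantAlgebroid (R : Type) [CommRing R] [Algebra ℝ R]
    (E : Type) [AddCommGroup E] [Module R E] : Type where
  bracket : E → E → E
  ip : E →ₗ[R] E →ₗ[R] R
  rho : E →ₗ[R] Derivation ℝ R R
  Dop : R → E
  ip_symm : ∀ u v, ip u v = ip v u
  ip_nondeg : ∀ u, (∀ v, ip u v = 0) → u = 0
  ip_Dop : ∀ f w, ip (Dop f) w = rho w f
  bracket_add_left : ∀ u v w, bracket (u + v) w = bracket u w + bracket v w
  bracket_add_right : ∀ u v w, bracket u (v + w) = bracket u v + bracket u w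
  jacobi : ∀ u v w, bracket u (bracket v w) = bracket (bracket u v) w + bracket v (bracket u w)
  leibniz : ∀ u (f : R) v, bracket u (f • v) = f • bracket u v + rho u f • v
  invariance : ∀ u v w, rho u (ip v w) = ip (bracket u v) w + ip v (bracket u w)
  symmetrized : ∀ u v, bracket u v + bracket v u = Dop (ip u v)

open Finset in
/-- The generalized scalar curvature `R(G, div)` of a generalized pseudometric
`G` and a divergence `dv`, computed in an admissible frame `b` with dual
frame `b'` via Lemma 4.13:
`R = −(div e_α)(div Ge^α) − 2ρ(e_α)(div Ge^α)
  + ¼ G^α_δ c_{αβγ} c^{δβγ} − 1/12 G^α_δ G^β_ε G^γ_ζ c_{αβγ} c^{δεζ}`,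
where `c(x,y,z) = ⟨[x,y], z⟩` are the structure functions. -/
noncomputable def gscal (R : Type) [CommRing R] [Algebra ℝ R]
    (E : Type) [AddCommGroup E] [Module R E] [Module ℝ E]
    (CA : CourantAlgebroid R E) (G : E →ₗ[R] E)
    (n : ℕ) (b b' : Fin n → E) (dv : E → R) : R :=
  - ∑ k, dv (b k) * dv (G (b' k))
  - 2 * ∑ k, CA.rho (b k) (dv (G (b' k)))
  + (1/4 : ℝ) • ∑ i, ∑ j, ∑ k,
      CA.ip (CA.bracket (b i) (b j)) (b k) *
        CA.ip (CA.bracket (G (b' i)) (b' j)) (b' k)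
  - (1/12 : ℝ) • ∑ i, ∑ j, ∑ k,
      CA.ip (CA.bracket (b i) (b j)) (b k) *
        CA.ip (CA.bracket (G (b' i)) (G (b' j))) (G (b' k))

/-- Proposition 4.14: changing the divergence by `⟨e,·⟩`
changes the generalized scalar curvature by
`R(G, div + ⟨e,·⟩) − R(G, div) = −|e|²_G − 2 div(Ge)`, where
`|e|²_G = ⟨Ge, e⟩`.  The admissible frame `b` (constant pairings) with dual
frame `b'` is encoded by: `b' i = Σ_j η i j • b j` with `η` symmetric real
constants, the frame is adapted to the splitting (`G(b k) = ε k • b k` with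
`ε k = ±1`, `η` block-diagonal), and `b`, `b'` reproduce every section. -/
theorem scalar_change_of_divergence
    (R : Type) [CommRing R] [Algebra ℝ R]
    (E : Type) [AddCommGroup E] [Module R E] [Module ℝ E] [IsScalarTower ℝ R E]
    (CA : CourantAlgebroid R E)
    (G : E →ₗ[R] E)
    (hGsym : ∀ x y, CA.ip (G x) y = CA.ip x (G y))
    (hGsq : ∀ x, G (G x) = x)
    (n : ℕ) (b b' : Fin n → E)
    (η : Fin n → Fin n → ℝ) (hηsym : ∀ i j, η i j = η j i)
    (hb' : ∀ i, b' i = ∑ j, η i j • b j)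
    (ε : Fin n → ℝ) (hε : ∀ k, ε k = 1 ∨ ε k = -1)
    (hGb : ∀ k, G (b k) = ε k • b k)
    (hηadapt : ∀ i j, ε i ≠ ε j → η i j = 0)
    (hrepr : ∀ x, ∑ k, CA.ip x (b' k) • b k = x)
    (dv : E → R)
    (hdv_add : ∀ u v, dv (u + v) = dv u + dv v)
    (hdv_leibniz : ∀ (g : R) u, dv (g • u) = g * dv u + CA.rho u g)
    (e : E) :
    gscal R E CA G n b b' (fun u => dv u + CA.ip e u)
      - gscal R E CA G n b b' dv
      = - CA.ip (G e) e - 2 * dv (G e) := by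
  classical
  -- basic scalar manipulation helpers
  have smul_alg : ∀ (a : ℝ) (v : E), a • v = (algebraMap ℝ R a) • v :=
    fun a v => (algebraMap_smul R a v).symm
  have ip_smulR : ∀ (x : E) (a : ℝ) (v : E), CA.ip x (a • v) = a • CA.ip x v := by
    intro x a v
    rw [smul_alg, map_smul, algebraMap_smul]
  have G_smulR : ∀ (a : ℝ) (v : E), G (a • v) = a • G v := by
    intro a v
    rw [smul_alg, map_smul, ← smul_alg]
  -- dv of 0 and of sums
  have hdv0 : dv 0 = 0 := by
    have h := hdv_add 0 0
    rw [add_zero] at h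
    exact left_eq_add.mp h
  have hdv_sum : ∀ (s : Finset (Fin n)) (f : Fin n → E),
      dv (∑ k ∈ s, f k) = ∑ k ∈ s, dv (f k) := by
    intro s f
    induction s using Finset.induction_on with
    | empty => simpa using hdv0
    | @insert a s ha ih =>
        rw [Finset.sum_insert ha, Finset.sum_insert ha, hdv_add, ih]
  -- derivation sums applied
  have hDsum : ∀ (s : Finset (Fin n)) (D : Fin n → Derivation ℝ R R) (g : R),
      (∑ j ∈ s, D j) g = ∑ j ∈ s, D j g := by
    intro s D g
    induction s using Finset.induction_on with
    | empty => simp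
    | @insert a s ha ih =>
        rw [Finset.sum_insert ha, Finset.sum_insert ha, Derivation.add_apply, ih]
  -- the second reproduction formula
  have hrepr2 : ∀ x : E, ∑ k, CA.ip x (b k) • b' k = x := by
    intro x
    conv_rhs => rw [← hrepr x]
    calc ∑ k, CA.ip x (b k) • b' k
        = ∑ k, ∑ j, η k j • (CA.ip x (b k) • b j) := by
          refine Finset.sum_congr rfl fun k _ => ?_
          rw [hb', Finset.smul_sum]
          exact Finset.sum_congr rfl fun j _ => (smul_comm _ _ _)
      _ = ∑ j, ∑ k, η k j • (CA.ip x (b k) • b j) := Finset.sum_comm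
      _ = ∑ k, CA.ip x (b' k) • b k := by
          refine Finset.sum_congr rfl fun k _ => ?_
          rw [hb', map_sum, Finset.sum_smul]
          refine Finset.sum_congr rfl fun j _ => ?_
          rw [ip_smulR, smul_assoc, hηsym]
  -- expression of `G e` in terms of the dual frame images
  have hGe_e : G e = ∑ k, CA.ip e (b k) • G (b' k) := by
    conv_lhs => rw [← hrepr2 e]
    rw [map_sum]
    exact Finset.sum_congr rfl fun k _ => map_smul _ _ _
  -- G of the dual frame, explicitly
  have hGb' : ∀ k, G (b' k) = ∑ j, (η k j * ε j) • b j := by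
    intro k
    rw [hb', map_sum]
    refine Finset.sum_congr rfl fun j _ => ?_
    rw [G_smulR, hGb, smul_smul]
  -- rho of real combinations of the frame
  have hrho_comb : ∀ (c : Fin n → ℝ) (g : R),
      CA.rho (∑ j, c j • b j) g = ∑ j, c j • CA.rho (b j) g := by
    intro c g
    rw [map_sum, hDsum]
    refine Finset.sum_congr rfl fun j _ => ?_
    rw [smul_alg, map_smul, Derivation.smul_apply, algebraMap_smul]
  -- pairing with G of the dual frame, explicitly
  have hip_Gb' : ∀ (x : E) (k : Fin n),
      CA.ip x (G (b' k)) = ∑ j, (η k j * ε j) • CA.ip x (b j) := by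
    intro x k
    rw [hGb' k, map_sum]
    exact Finset.sum_congr rfl fun j _ => ip_smulR _ _ _
  -- the key swap identity for the rho terms
  have hswap : ∑ k, CA.rho (G (b' k)) (CA.ip e (b k))
      = ∑ k, CA.rho (b k) (CA.ip e (G (b' k))) := by
    calc ∑ k, CA.rho (G (b' k)) (CA.ip e (b k))
        = ∑ k, ∑ j, (η k j * ε j) • CA.rho (b j) (CA.ip e (b k)) := by
          refine Finset.sum_congr rfl fun k _ => ?_
          rw [hGb' k, hrho_comb]
      _ = ∑ j, ∑ k, (η k j * ε j) • CA.rho (b j) (CA.ip e (b k)) := Finset.sum_comm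
      _ = ∑ k, ∑ j, (η k j * ε j) • CA.rho (b k) (CA.ip e (b j)) := by
          refine Finset.sum_congr rfl fun k _ => Finset.sum_congr rfl fun j _ => ?_
          by_cases hjk : ε j = ε k
          · rw [hηsym k j, hjk]
          · rw [hηadapt j k hjk, hηadapt k j fun h => hjk h.symm]; simp
      _ = ∑ k, CA.rho (b k) (CA.ip e (G (b' k))) := by
          refine Finset.sum_congr rfl fun k _ => ?_
          rw [hip_Gb' e k, map_sum]
          exact Finset.sum_congr rfl fun j _ => (Derivation.map_smul _ _ _).symm
  -- the three sum identities
  have h1 : ∑ k, dv (b k) * CA.ip e (G (b' k))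
      + ∑ k, CA.rho (b k) (CA.ip e (G (b' k))) = dv (G e) := by
    conv_rhs => rw [← hrepr (G e)]
    rw [hdv_sum, ← Finset.sum_add_distrib]
    refine Finset.sum_congr rfl fun k _ => ?_
    rw [← hGsym, hdv_leibniz]
    ring
  have h2 : ∑ k, CA.ip e (b k) * dv (G (b' k))
      + ∑ k, CA.rho (b k) (CA.ip e (G (b' k))) = dv (G e) := by
    conv_rhs => rw [hGe_e]
    rw [hdv_sum, ← hswap, ← Finset.sum_add_distrib]
    refine Finset.sum_congr rfl fun k _ => ?_
    rw [hdv_leibniz]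
  have h3 : ∑ k, CA.ip e (b k) * CA.ip e (G (b' k)) = CA.ip (G e) e := by
    have h := congrArg (CA.ip e) (hrepr (G e))
    rw [map_sum] at h
    simp only [map_smul, smul_eq_mul] at h
    calc ∑ k, CA.ip e (b k) * CA.ip e (G (b' k))
        = ∑ k, CA.ip (G e) (b' k) * CA.ip e (b k) := by
          refine Finset.sum_congr rfl fun k _ => ?_
          rw [← hGsym]; ring
      _ = CA.ip e (G e) := h
      _ = CA.ip (G e) e := CA.ip_symm _ _
  -- expand the change of divergence inside gscal
  simp only [gscal]
  have e1 : ∑ k, (dv (b k) + CA.ip e (b k)) * (dv (G (b' k)) + CA.ip e (G (b' k)))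
      = ∑ k, dv (b k) * dv (G (b' k))
        + (∑ k, dv (b k) * CA.ip e (G (b' k))
          + (∑ k, CA.ip e (b k) * dv (G (b' k))
            + ∑ k, CA.ip e (b k) * CA.ip e (G (b' k)))) := by
    rw [← Finset.sum_add_distrib, ← Finset.sum_add_distrib, ← Finset.sum_add_distrib]
    exact Finset.sum_congr rfl fun k _ => by ring
  have e2 : ∑ k, CA.rho (b k) (dv (G (b' k)) + CA.ip e (G (b' k)))
      = ∑ k, CA.rho (b k) (dv (G (b' k))) + ∑ k, CA.rho (b k) (CA.ip e (G (b' k))) := by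
    rw [← Finset.sum_add_distrib]
    exact Finset.sum_congr rfl fun k _ => map_add _ _ _
  rw [e1, e2]
  generalize (1/4 : ℝ) • (∑ i, ∑ j, ∑ k,
      CA.ip (CA.bracket (b i) (b j)) (b k) *
        CA.ip (CA.bracket (G (b' i)) (b' j)) (b' k)) = T
  generalize (1/12 : ℝ) • (∑ i, ∑ j, ∑ k,
      CA.ip (CA.bracket (b i) (b j)) (b k) *
        CA.ip (CA.bracket (G (b' i)) (G (b' j))) (G (b' k))) = U
  linear_combination -h1 - h2 - h3
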